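/- Let R be a ring with 1 satisfying the polynomial identity [x,y][u,v] = 0 (i.e., (xy − yx)(uv − vu) = 0 for all x,y,u,v ∈ R), let n ≥ 1, and let A be an n×n matrix over R with symmetric characteristic polynomial p(x) = λ_0 + λ_1 x + ⋯ + λ_{n−1} x^{n−1} + λ_n x^n, where λ_n = n!. Then the Cayley–Hamilton identity with sandwich coefficients Σ_{0 ≤ i,j ≤ n} A^i (λ_i λ_j) A^j = 0 holds, where A^i (λ_i λ_j) A^j denotes the matrix product of A^i, the scalar matrix (λ_i λ_j)·I, and A^j; in particular the leading coefficient is c_{n,n} = (n!)². -/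

import Mathlib

open Polynomial in
/-- The preadjoint `A*` of an `n × n` matrix `A` over a (possibly noncommutative) ring `R`:
its `(r, s)` entry is the sum, over all permutations `τ, ρ` of `Fin n` with `τ s = s` and
`ρ s = r`, of `sgn ρ` times the ordered product
`a_{τ(1),ρ(τ(1))} ⋯ a_{τ(s-1),ρ(τ(s-1))} · a_{τ(s+1),ρ(τ(s+1))} ⋯ a_{τ(n),ρ(τ(n))}`
(the factor at position `s` is omitted). -/
def Matrix.preadjoint {n : ℕ} {R : Type*} [Ring R] (A : Matrix (Fin n) (Fin n) R) :
    Matrix (Fin n) (Fin n) R :=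
  fun r s =>
    ∑ τ : Equiv.Perm (Fin n), ∑ ρ : Equiv.Perm (Fin n),
      if τ s = s ∧ ρ s = r then
        ((Equiv.Perm.sign ρ : ℤ)) •
          (((List.finRange n).filter (fun k => k ≠ s)).map
            (fun k => A (τ k) (ρ (τ k)))).prod
      else 0

open Polynomial in
/-- The characteristic matrix `x·I - A` of `A`, as a matrix over `R[x]`. -/
noncomputable def Matrix.charMat {n : ℕ} {R : Type*} [Ring R] (A : Matrix (Fin n) (Fin n) R) :
    Matrix (Fin n) (Fin n) R[X] :=
  (X : R[X]) • (1 : Matrix (Fin n) (Fin n) R[X]) - A.map C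

/-- The symmetric determinant `s-det A = tr(A* · A) = tr(A · A*)`. -/
def Matrix.sdet {n : ℕ} {R : Type*} [Ring R] (A : Matrix (Fin n) (Fin n) R) : R :=
  Matrix.trace (A.preadjoint * A)

open Polynomial in
/-- The symmetric characteristic polynomial `p(x) = s-det(x·I - A) ∈ R[x]`. -/
noncomputable def Matrix.sCharPoly {n : ℕ} {R : Type*} [Ring R] (A : Matrix (Fin n) (Fin n) R) : R[X] :=
  A.charMat.sdet

namespace CH31aux

open Polynomial

/-! ### The commutator ideal `T` -/

variable {R : Type*} [Ring R]

def T (R : Type*) [Ring R] : AddSubgroup R :=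
  AddSubgroup.closure {x | ∃ a u v b, x = a * (u * v - v * u) * b}

lemma gen_mem_T (a u v b : R) : a * (u * v - v * u) * b ∈ T R :=
  AddSubgroup.subset_closure ⟨a, u, v, b, rfl⟩

lemma T_mul_left (r : R) {x : R} (hx : x ∈ T R) : r * x ∈ T R := by
  induction hx using AddSubgroup.closure_induction with
  | mem x hx => obtain ⟨a, u, v, b, rfl⟩ := hx
                simpa [mul_assoc] using gen_mem_T (r * a) u v b
  | zero => simpa using (T R).zero_mem
  | add x y _ _ hx hy => simpa [mul_add] using (T R).add_mem hx hy
  | neg x _ hx => simpa [mul_neg] using (T R).neg_mem hx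

lemma T_mul_right (r : R) {x : R} (hx : x ∈ T R) : x * r ∈ T R := by
  induction hx using AddSubgroup.closure_induction with
  | mem x hx => obtain ⟨a, u, v, b, rfl⟩ := hx
                simpa [mul_assoc] using gen_mem_T a u v (b * r)
  | zero => simpa using (T R).zero_mem
  | add x y _ _ hx hy => simpa [add_mul] using (T R).add_mem hx hy
  | neg x _ hx => simpa [neg_mul] using (T R).neg_mem hx

lemma comm_mul_comm (hR : ∀ x y u v : R, (x * y - y * x) * (u * v - v * u) = 0)
    (u v t u' v' : R) : (u * v - v * u) * t * (u' * v' - v' * u') = 0 := by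
  have h1 := hR u v u' v'
  have h2 := hR (u * v - v * u) t u' v'
  have key : (u * v - v * u) * t =
      t * (u * v - v * u) + ((u * v - v * u) * t - t * (u * v - v * u)) := by abel
  rw [key, add_mul, mul_assoc, h1, mul_zero, h2, add_zero]

lemma T_mul_T (hR : ∀ x y u v : R, (x * y - y * x) * (u * v - v * u) = 0)
    {x y : R} (hx : x ∈ T R) (hy : y ∈ T R) : x * y = 0 := by
  induction hx using AddSubgroup.closure_induction with
  | mem x hx =>
    obtain ⟨a, u, v, b, rfl⟩ := hx
    induction hy using AddSubgroup.closure_induction with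
    | mem y hy =>
      obtain ⟨a', u', v', b', rfl⟩ := hy
      have h0 := comm_mul_comm hR u v (b * a') u' v'
      calc a * (u * v - v * u) * b * (a' * (u' * v' - v' * u') * b')
          = a * ((u * v - v * u) * (b * a') * (u' * v' - v' * u')) * b' := by
            noncomm_ring
        _ = 0 := by rw [h0]; simp
    | zero => simp
    | add y z _ _ hy hz => rw [mul_add, hy, hz, add_zero]
    | neg y _ hy => rw [mul_neg, hy, neg_zero]
  | zero => simp
  | add x z _ _ hx hz => rw [add_mul, hx, hz, add_zero]
  | neg x _ hx => rw [neg_mul, hx, neg_zero]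

/-! ### The quotient by `T` -/

def con (R : Type*) [Ring R] : RingCon R where
  r x y := x - y ∈ T R
  iseqv := by
    constructor
    · intro x; simpa using (T R).zero_mem
    · intro x y h; simpa using (T R).neg_mem h
    · intro x y z h1 h2; simpa using (T R).add_mem h1 h2
  mul' := by
    intro a b c d h1 h2
    show a * c - b * d ∈ T R
    have e : a * c - b * d = a * (c - d) + (a - b) * d := by noncomm_ring
    rw [e]
    exact (T R).add_mem (T_mul_left a h2) (T_mul_right d h1)
  add' := by
    intro a b c d h1 h2
    show a + c - (b + d) ∈ T R
    have e : a + c - (b + d) = (a - b) + (c - d) := by abel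
    rw [e]; exact (T R).add_mem h1 h2

instance : CommRing (con R).Quotient :=
  { (inferInstance : Ring (con R).Quotient) with
    mul_comm := by
      rintro ⟨a⟩ ⟨b⟩
      show ((a * b : R) : (con R).Quotient) = ((b * a : R) : (con R).Quotient)
      rw [RingCon.eq]
      show a * b - b * a ∈ T R
      simpa using gen_mem_T 1 a b 1 }

lemma mem_T_of_pi_eq_zero {x : R} (h : (con R).mk' x = 0) : x ∈ T R := by
  have h1 : ((x : (con R).Quotient)) = ((0 : R) : (con R).Quotient) := by
    simpa using h
  rw [RingCon.eq] at h1
  have h2 : x - 0 ∈ T R := h1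
  simpa using h2

/-! ### Lists and counting -/

variable {n : ℕ}

lemma list_toFinset (s : Fin n) :
    ((List.finRange n).filter (fun k => k ≠ s)).toFinset = Finset.univ.erase s := by
  rw [List.toFinset_filter, List.toFinset_finRange]
  simp [Finset.filter_ne']

lemma list_nodup (s : Fin n) :
    ((List.finRange n).filter (fun k => k ≠ s)).Nodup :=
  (List.nodup_finRange n).filter _

lemma list_length (s : Fin n) :
    ((List.finRange n).filter (fun k => k ≠ s)).length = n - 1 := by
  rw [← List.toFinset_card_of_nodup (list_nodup s), list_toFinset]
  simp [Finset.card_erase_of_mem]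

lemma list_prod_eq {M : Type*} [CommMonoid M] (s : Fin n) (f : Fin n → M) :
    (((List.finRange n).filter (fun k => k ≠ s)).map f).prod
      = ∏ k ∈ Finset.univ.erase s, f k := by
  rw [← List.prod_toFinset f (list_nodup s), list_toFinset]

lemma card_fix (s : Fin n) :
    (Finset.univ.filter fun τ : Equiv.Perm (Fin n) => τ s = s).card = (n - 1).factorial := by
  rw [← Fintype.card_subtype]
  have e : {τ : Equiv.Perm (Fin n) // τ s = s} ≃ Equiv.Perm {x : Fin n // x ≠ s} := by
    refine (Equiv.subtypeEquivRight ?_).trans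
      (Equiv.Perm.subtypeEquivSubtypePerm (fun x : Fin n => x ≠ s)).symm
    intro f
    constructor
    · intro hf a ha
      have : a = s := not_not.mp ha
      rw [this, hf]
    · intro hf; exact hf s (by simp)
  rw [Fintype.card_congr e, Fintype.card_perm]
  congr 1
  have : Fintype.card {x : Fin n // x ≠ s} = Fintype.card {x : Fin n // ¬ x = s} := rfl
  rw [this, Fintype.card_subtype_compl, Fintype.card_subtype_eq, Fintype.card_fin]

/-! ### Expansion of `sdet` and the commutative case -/

lemma sdet_expand {R : Type*} [Ring R] (B : Matrix (Fin n) (Fin n) R) :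
    Matrix.sdet B = ∑ r : Fin n, ∑ s : Fin n, ∑ τ : Equiv.Perm (Fin n),
      ∑ ρ : Equiv.Perm (Fin n),
        if τ s = s ∧ ρ s = r then
          ((Equiv.Perm.sign ρ : ℤ)) •
            ((((List.finRange n).filter (fun k => k ≠ s)).map
              (fun k => B (τ k) (ρ (τ k)))).prod * B s r)
        else 0 := by
  unfold Matrix.sdet
  rw [Matrix.trace]
  simp only [Matrix.diag_apply, Matrix.mul_apply]
  unfold Matrix.preadjoint
  simp only [ Finset.sum_mul, ite_mul, zero_mul,
    smul_mul_assoc]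

lemma sdet_comm {S : Type*} [CommRing S] (hn : 1 ≤ n) (B : Matrix (Fin n) (Fin n) S) :
    Matrix.sdet B = n.factorial • B.det := by
  rw [sdet_expand]
  calc
    (∑ r : Fin n, ∑ s : Fin n, ∑ τ : Equiv.Perm (Fin n), ∑ ρ : Equiv.Perm (Fin n),
        if τ s = s ∧ ρ s = r then
          ((Equiv.Perm.sign ρ : ℤ)) •
            ((((List.finRange n).filter (fun k => k ≠ s)).map
              (fun k => B (τ k) (ρ (τ k)))).prod * B s r)
        else 0)
      = ∑ r : Fin n, ∑ s : Fin n, ∑ τ : Equiv.Perm (Fin n), ∑ ρ : Equiv.Perm (Fin n),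
          if τ s = s ∧ ρ s = r then
            ((Equiv.Perm.sign ρ : ℤ)) •
              ((∏ k ∈ Finset.univ.erase s, B k (ρ k)) * B s (ρ s))
          else 0 := by
        refine Finset.sum_congr rfl fun r _ => Finset.sum_congr rfl fun s _ =>
          Finset.sum_congr rfl fun τ _ => Finset.sum_congr rfl fun ρ _ => ?_
        by_cases h : τ s = s ∧ ρ s = r
        · rw [if_pos h, if_pos h, list_prod_eq s (fun k => B (τ k) (ρ (τ k))),
            Equiv.Perm.prod_comp τ (Finset.univ.erase s) (fun k => B k (ρ k))
              (fun a ha => Finset.mem_erase.mpr ⟨fun he => ha (he ▸ h.1), Finset.mem_univ a⟩),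
            h.2]
        · rw [if_neg h, if_neg h]
    _ = ∑ s : Fin n, ∑ τ : Equiv.Perm (Fin n), ∑ ρ : Equiv.Perm (Fin n), ∑ r : Fin n,
          if τ s = s ∧ ρ s = r then
            ((Equiv.Perm.sign ρ : ℤ)) •
              ((∏ k ∈ Finset.univ.erase s, B k (ρ k)) * B s (ρ s))
          else 0 := by
        rw [Finset.sum_comm]
        refine Finset.sum_congr rfl fun s _ => ?_
        rw [Finset.sum_comm]
        exact Finset.sum_congr rfl fun τ _ => Finset.sum_comm
    _ = ∑ s : Fin n, ∑ τ : Equiv.Perm (Fin n),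
          if τ s = s then (∑ ρ : Equiv.Perm (Fin n),
            ((Equiv.Perm.sign ρ : ℤ)) •
              ((∏ k ∈ Finset.univ.erase s, B k (ρ k)) * B s (ρ s))) else 0 := by
        refine Finset.sum_congr rfl fun s _ => Finset.sum_congr rfl fun τ _ => ?_
        by_cases h : τ s = s
        · rw [if_pos h]
          refine Finset.sum_congr rfl fun ρ _ => ?_
          simp [h]
        · simp [h]
    _ = ∑ s : Fin n, ∑ τ : Equiv.Perm (Fin n), if τ s = s then B.det else 0 := by
        refine Finset.sum_congr rfl fun s _ => Finset.sum_congr rfl fun τ _ => ?_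
        congr 1
        have h0 : ∀ ρ : Equiv.Perm (Fin n),
            (∏ k ∈ Finset.univ.erase s, B k (ρ k)) * B s (ρ s)
              = ∏ k : Fin n, B k (ρ k) := fun ρ =>
          Finset.prod_erase_mul Finset.univ _ (Finset.mem_univ s)
        simp_rw [h0]
        rw [← Matrix.det_transpose B, Matrix.det_apply]
        simp [Matrix.transpose_apply, Units.smul_def, zsmul_eq_mul]
    _ = n.factorial • B.det := by
        have h1 : ∀ s : Fin n, (∑ τ : Equiv.Perm (Fin n), if τ s = s then B.det else 0)
            = (n - 1).factorial • B.det := by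
          intro s
          rw [← Finset.sum_filter, Finset.sum_const, card_fix]
        simp_rw [h1]
        rw [Finset.sum_const, Finset.card_univ, Fintype.card_fin, smul_smul,
          Nat.mul_factorial_pred (by omega)]

/-! ### The characteristic matrix entrywise -/

lemma charMat_apply {R : Type*} [Ring R] (A : Matrix (Fin n) (Fin n) R) (i j : Fin n) :
    Matrix.charMat A i j = (if i = j then X else 0) - C (A i j) := by
  simp [Matrix.charMat, Matrix.sub_apply, Matrix.smul_apply, Matrix.one_apply,
    Matrix.map_apply, mul_ite, smul_eq_mul]

lemma natDegree_charMat_le {R : Type*} [Ring R] (A : Matrix (Fin n) (Fin n) R) (i j : Fin n) :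
    (Matrix.charMat A i j).natDegree ≤ 1 := by
  rw [charMat_apply]
  refine (natDegree_sub_le _ _).trans ?_
  simp only [max_le_iff, natDegree_C, Nat.zero_le, and_true]
  split
  · exact natDegree_X_le
  · simp

lemma coeff_one_charMat {R : Type*} [Ring R] (A : Matrix (Fin n) (Fin n) R) (i j : Fin n) :
    (Matrix.charMat A i j).coeff 1 = if i = j then 1 else 0 := by
  rw [charMat_apply]
  by_cases h : i = j <;> simp [h, coeff_C]

/-! ### The leading coefficient of the symmetric characteristic polynomial -/

lemma sCharPoly_coeff_n {R : Type*} [Ring R] (hn : 1 ≤ n) (A : Matrix (Fin n) (Fin n) R) :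
    (Matrix.sCharPoly A).coeff n = (n.factorial : R) := by
  rw [Matrix.sCharPoly, sdet_expand]
  simp only [finset_sum_coeff]
  have key : ∀ (r s : Fin n) (τ ρ : Equiv.Perm (Fin n)),
      (if τ s = s ∧ ρ s = r then
          ((Equiv.Perm.sign ρ : ℤ)) •
            ((((List.finRange n).filter (fun k => k ≠ s)).map
              (fun k => Matrix.charMat A (τ k) (ρ (τ k)))).prod * Matrix.charMat A s r)
        else 0).coeff n
      = if τ s = s ∧ ρ = 1 ∧ r = s then (1 : R) else 0 := by
    intro r s τ ρ
    by_cases hc : τ s = s ∧ ρ s = r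
    · rw [if_pos hc]
      set l : List R[X] :=
        (((List.finRange n).filter (fun k => k ≠ s)).map
          (fun k => Matrix.charMat A (τ k) (ρ (τ k)))) ++ [Matrix.charMat A s r] with hl
      have hprod : (((List.finRange n).filter (fun k => k ≠ s)).map
          (fun k => Matrix.charMat A (τ k) (ρ (τ k)))).prod * Matrix.charMat A s r
          = l.prod := by simp [hl]
      have hlen : l.length = n := by
        rw [hl, List.length_append, List.length_map, list_length s, List.length_singleton]
        omega
      have hdeg : ∀ p ∈ l, p.natDegree ≤ 1 := by
        intro p hp
        rcases List.mem_append.mp hp with hp | hp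
        · obtain ⟨k, -, rfl⟩ := List.mem_map.mp hp
          exact natDegree_charMat_le A _ _
        · rw [List.mem_singleton.mp hp]
          exact natDegree_charMat_le A _ _
      have hco := coeff_list_prod_of_natDegree_le l 1 hdeg
      rw [hlen, mul_one] at hco
      rw [coeff_smul, hprod, hco]
      simp only [hl, List.map_append, List.map_map, List.prod_append, List.map_singleton,
        List.prod_singleton]
      by_cases hρ : ρ = 1
      · subst hρ
        have hr' : r = s := by simpa using hc.2.symm
        have h1 : ((((List.finRange n).filter (fun k => k ≠ s)).map
            ((fun p => p.coeff 1) ∘ (fun k =>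
              Matrix.charMat A (τ k) ((1 : Equiv.Perm (Fin n)) (τ k))))).prod : R) = 1 := by
          apply List.prod_eq_one
          intro x hx
          obtain ⟨k, -, rfl⟩ := List.mem_map.mp hx
          simp [coeff_one_charMat]
        rw [h1]
        simp [coeff_one_charMat, hr', hc.1]
      · rw [if_neg (by rintro ⟨-, h, -⟩; exact hρ h)]
        by_cases hsr : s = r
        · subst hsr
          have hρs : ρ s = s := hc.2
          obtain ⟨k0, hk0⟩ : ∃ k, ρ k ≠ k := by
            by_contra h
            push_neg at h
            exact hρ (Equiv.ext h)
          have hk0s : k0 ≠ s := fun h => hk0 (by rw [h]; exact hρs)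
          set k' := τ.symm k0 with hk'
          have hτk' : τ k' = k0 := τ.apply_symm_apply k0
          have hk's : k' ≠ s := by
            intro h
            apply hk0s
            rw [← hτk', h, hc.1]
          have hmem : k' ∈ (List.finRange n).filter (fun k => k ≠ s) := by
            simp [List.mem_filter, hk's]
          have hzero : (0 : R) ∈ ((List.finRange n).filter (fun k => k ≠ s)).map
              ((fun p => p.coeff 1) ∘ (fun k => Matrix.charMat A (τ k) (ρ (τ k)))) := by
            refine List.mem_map.mpr ⟨k', hmem, ?_⟩
            simp only [Function.comp_apply, coeff_one_charMat, hτk']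
            exact if_neg fun h => hk0 h.symm
          rw [List.prod_eq_zero hzero, zero_mul, smul_zero]
        · rw [coeff_one_charMat, if_neg hsr, mul_zero, smul_zero]
    · rw [if_neg hc, coeff_zero, if_neg]
      rintro ⟨h1, h2, h3⟩
      exact hc ⟨h1, by rw [h2, h3]; simp⟩
  simp_rw [key]
  have c1 : ∀ (r s : Fin n) (τ : Equiv.Perm (Fin n)),
      (∑ ρ : Equiv.Perm (Fin n), if τ s = s ∧ ρ = 1 ∧ r = s then (1 : R) else 0)
        = if τ s = s ∧ r = s then 1 else 0 := by
    intro r s τ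
    by_cases h1 : τ s = s <;> by_cases h2 : r = s <;> simp [h1, h2]
  simp_rw [c1]
  have c2 : ∀ r s : Fin n,
      (∑ τ : Equiv.Perm (Fin n), if τ s = s ∧ r = s then (1 : R) else 0)
        = if r = s then ((n - 1).factorial : R) else 0 := by
    intro r s
    by_cases h2 : r = s
    · simp only [h2, and_true, if_true]
      rw [Finset.sum_boole, card_fix]
    · simp [h2]
  simp_rw [c2]
  have c3 : ∀ r : Fin n,
      (∑ s : Fin n, if r = s then ((n - 1).factorial : R) else 0)
        = ((n - 1).factorial : R) := by
    intro r
    simp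
  simp_rw [c3]
  rw [Finset.sum_const, Finset.card_univ, Fintype.card_fin, nsmul_eq_mul]
  rw [← Nat.cast_mul, Nat.mul_factorial_pred (by omega)]

/-! ### Mapping lemmas -/

variable {R S : Type*} [Ring R] [Ring S]

lemma preadjoint_map (f : R →+* S) (A : Matrix (Fin n) (Fin n) R) :
    Matrix.preadjoint (A.map f) = (Matrix.preadjoint A).map f := by
  ext r s
  simp only [Matrix.preadjoint, Matrix.map_apply, map_sum]
  refine Finset.sum_congr rfl fun τ _ => Finset.sum_congr rfl fun ρ _ => ?_
  rw [apply_ite f, map_zero, map_zsmul, map_list_prod, List.map_map]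
  rfl

lemma sdet_map (f : R →+* S) (A : Matrix (Fin n) (Fin n) R) :
    Matrix.sdet (A.map f) = f (Matrix.sdet A) := by
  rw [Matrix.sdet, Matrix.sdet, preadjoint_map]
  simp [Matrix.trace, Matrix.map_apply, map_sum, Matrix.mul_apply, map_mul]

lemma charMat_map (f : R →+* S) (A : Matrix (Fin n) (Fin n) R) :
    Matrix.charMat (A.map f) = (Matrix.charMat A).map (Polynomial.mapRingHom f) := by
  ext i j
  simp only [Matrix.map_apply, charMat_apply, coe_mapRingHom, Polynomial.map_sub, map_C]
  congr 1
  split <;> simp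

lemma sCharPoly_map (f : R →+* S) (A : Matrix (Fin n) (Fin n) R) :
    Matrix.sCharPoly (A.map f) = (Matrix.sCharPoly A).map f := by
  rw [Matrix.sCharPoly, Matrix.sCharPoly, charMat_map, sdet_map (Polynomial.mapRingHom f)]
  rfl

lemma charMat_eq_charmatrix {S : Type*} [CommRing S] (B : Matrix (Fin n) (Fin n) S) :
    Matrix.charMat B = Matrix.charmatrix B := by
  ext i j
  rw [charMat_apply, Matrix.charmatrix]
  by_cases h : i = j <;> simp [h, Matrix.one_apply]

lemma smul_one_map (f : R →+* S) (a : R) :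
    ((a • (1 : Matrix (Fin n) (Fin n) R)).map f) = f a • (1 : Matrix (Fin n) (Fin n) S) := by
  ext i j
  by_cases h : i = j <;> simp [Matrix.map_apply, Matrix.one_apply, h]

end CH31aux

open Polynomial in
/-- Theorem 3.1: if `R` satisfies the polynomial identity `[x,y][u,v] = 0` and
`p(x) = λ₀ + λ₁x + ⋯ + λₙxⁿ` (with `λₙ = n!`) is the symmetric characteristic polynomial of an
`n × n` matrix `A` over `R` (`n ≥ 1`), then the invariant Cayley–Hamilton identity with sandwich
coefficients `∑_{0 ≤ i,j ≤ n} Aⁱ (λᵢλⱼ) Aʲ = 0` holds; in particular the leading sandwich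
coefficient is `λₙλₙ = (n!)²`. -/
theorem cayley_hamilton_sandwich
    {n : ℕ} (hn : 1 ≤ n) {R : Type*} [Ring R]
    (hR : ∀ x y u v : R, (x * y - y * x) * (u * v - v * u) = 0)
    (A : Matrix (Fin n) (Fin n) R) :
    (∑ i ∈ Finset.range (n + 1), ∑ j ∈ Finset.range (n + 1),
      A ^ i * ((A.sCharPoly.coeff i * A.sCharPoly.coeff j) • (1 : Matrix (Fin n) (Fin n) R))
        * A ^ j = 0) ∧
    A.sCharPoly.coeff n * A.sCharPoly.coeff n = ((n.factorial : R)) ^ 2 := by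
  classical
  constructor
  · set lam : ℕ → R := fun i => A.sCharPoly.coeff i with hlam
    set Q := (CH31aux.con R).Quotient
    set π : R →+* Q := (CH31aux.con R).mk' with hπ
    set L : Matrix (Fin n) (Fin n) R :=
      ∑ i ∈ Finset.range (n + 1), A ^ i * (lam i • 1) with hL
    set M : Matrix (Fin n) (Fin n) R :=
      ∑ j ∈ Finset.range (n + 1), (lam j • 1) * A ^ j with hM
    -- the image of the coefficients in the commutative quotient
    have hch : ∀ i, π (lam i) = n.factorial • ((A.map π).charpoly.coeff i) := by
      intro i
      have h1 : π (lam i) = ((A.map π).sCharPoly).coeff i := by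
        rw [CH31aux.sCharPoly_map π A, Polynomial.coeff_map]
      rw [h1, Matrix.sCharPoly, CH31aux.charMat_eq_charmatrix, CH31aux.sdet_comm hn,
        ← Matrix.charpoly, Polynomial.coeff_smul]
    -- the images of L and M vanish
    have hπL : L.map ⇑π = 0 := by
      rcases subsingleton_or_nontrivial Q with hQ | hQ
      · ext i j; exact Subsingleton.elim _ _
      · have e1 : L.map ⇑π = π.mapMatrix L := rfl
        rw [e1, hL, map_sum]
        have e2 : ∀ i, π.mapMatrix (A ^ i * (lam i • 1))
            = (n.factorial • (A.map ⇑π).charpoly.coeff i) • (A.map ⇑π) ^ i := by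
          intro i
          rw [map_mul, map_pow]
          have : π.mapMatrix (lam i • (1 : Matrix (Fin n) (Fin n) R))
              = π (lam i) • (1 : Matrix (Fin n) (Fin n) Q) := CH31aux.smul_one_map π (lam i)
          rw [RingHom.mapMatrix_apply, RingHom.mapMatrix_apply] at *
          rw [this, hch i, Matrix.mul_smul, mul_one]
        simp_rw [e2]
        have e3 : ∀ i, (n.factorial • (A.map ⇑π).charpoly.coeff i) • (A.map ⇑π) ^ i
            = n.factorial • ((A.map ⇑π).charpoly.coeff i • (A.map ⇑π) ^ i) := by
          intro i; rw [smul_assoc]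
        simp_rw [e3, ← Finset.smul_sum]
        have hdeg : (A.map ⇑π).charpoly.natDegree < n + 1 := by
          rw [Matrix.charpoly_natDegree_eq_dim, Fintype.card_fin]
          omega
        rw [← Polynomial.aeval_eq_sum_range' hdeg, Matrix.aeval_self_charpoly, smul_zero]
    have hπM : M.map ⇑π = 0 := by
      rcases subsingleton_or_nontrivial Q with hQ | hQ
      · ext i j; exact Subsingleton.elim _ _
      · have e1 : M.map ⇑π = π.mapMatrix M := rfl
        rw [e1, hM, map_sum]
        have e2 : ∀ j, π.mapMatrix ((lam j • 1) * A ^ j)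
            = (n.factorial • (A.map ⇑π).charpoly.coeff j) • (A.map ⇑π) ^ j := by
          intro j
          rw [map_mul, map_pow]
          have : π.mapMatrix (lam j • (1 : Matrix (Fin n) (Fin n) R))
              = π (lam j) • (1 : Matrix (Fin n) (Fin n) Q) := CH31aux.smul_one_map π (lam j)
          rw [RingHom.mapMatrix_apply, RingHom.mapMatrix_apply] at *
          rw [this, hch j, Matrix.smul_mul, one_mul]
        simp_rw [e2]
        have e3 : ∀ j, (n.factorial • (A.map ⇑π).charpoly.coeff j) • (A.map ⇑π) ^ j
            = n.factorial • ((A.map ⇑π).charpoly.coeff j • (A.map ⇑π) ^ j) := by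
          intro j; rw [smul_assoc]
        simp_rw [e3, ← Finset.smul_sum]
        have hdeg : (A.map ⇑π).charpoly.natDegree < n + 1 := by
          rw [Matrix.charpoly_natDegree_eq_dim, Fintype.card_fin]
          omega
        rw [← Polynomial.aeval_eq_sum_range' hdeg, Matrix.aeval_self_charpoly, smul_zero]
    -- hence the entries of L and M lie in T
    have hLT : ∀ p q : Fin n, L p q ∈ CH31aux.T R := by
      intro p q
      apply CH31aux.mem_T_of_pi_eq_zero
      have := congrFun (congrFun hπL p) q
      simp only [Matrix.map_apply, Matrix.zero_apply] at this
      exact this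
    have hMT : ∀ p q : Fin n, M p q ∈ CH31aux.T R := by
      intro p q
      apply CH31aux.mem_T_of_pi_eq_zero
      have := congrFun (congrFun hπM p) q
      simp only [Matrix.map_apply, Matrix.zero_apply] at this
      exact this
    -- the sandwich sum factors as L * M
    have hfact : (∑ i ∈ Finset.range (n + 1), ∑ j ∈ Finset.range (n + 1),
        A ^ i * ((lam i * lam j) • (1 : Matrix (Fin n) (Fin n) R)) * A ^ j) = L * M := by
      rw [hL, hM, Finset.sum_mul_sum]
      refine Finset.sum_congr rfl fun i _ => Finset.sum_congr rfl fun j _ => ?_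
      have hab : (lam i • (1 : Matrix (Fin n) (Fin n) R)) * (lam j • 1)
          = (lam i * lam j) • 1 := by
        rw [Matrix.smul_mul, one_mul, smul_smul]
      conv_rhs => rw [mul_assoc (A ^ i),
        ← mul_assoc (lam i • (1 : Matrix (Fin n) (Fin n) R)), hab, ← mul_assoc]
    rw [hfact]
    ext p q
    rw [Matrix.mul_apply, Matrix.zero_apply]
    exact Finset.sum_eq_zero fun k _ => CH31aux.T_mul_T hR (hLT p k) (hMT k q)
  · rw [CH31aux.sCharPoly_coeff_n hn A, sq]
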